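/- arXiv:2304.01274 — 2 statements merged into one kernel-verified Lean document; each statement's English description precedes it below -/
import Mathlib

section
/- Let X and Y be topological spaces, let n ≥ 2, let k ≥ 1, and let φ₁, …, φₙ : Y → X be continuous maps. Then the following are equivalent: (i) there exist open sets U₁, …, U_k covering Y and, for each j ∈ {1, …, k}, a continuous map g_j : U_j → C([0,1], X) such that for every a ∈ U_j and every i ∈ {1, …, n} one has g_j(a)((i−1)/(n−1)) = φᵢ(a); (ii) there exist open sets V₁, …, V_k covering Y such that for every j ∈ {1, …, k} and all i, l ∈ {1, …, n}, the restrictions of φᵢ and φ_l to V_j are homotopic as continuous maps V_j → X. -/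
open Set unitInterval

/-- For continuous maps `φ₁, …, φₙ : Y → X` (indexed here by `Fin n`,
with time points `(i-1)/(n-1)` written as `i/(n-1)` for `i : Fin n`), having an open
cover `U₁, …, U_k` of `Y` with continuous local sections `g_j : U_j → C([0,1], X)`
passing through the `φᵢ` at the prescribed times is equivalent to having an open
cover `V₁, …, V_k` of `Y` on each piece of which all the `φᵢ` are mutually homotopic. -/
theorem statement0 {X Y : Type*} [TopologicalSpace X] [TopologicalSpace Y]
    (n k : ℕ) (hn : 2 ≤ n) (hk : 1 ≤ k) (φ : Fin n → C(Y, X)) :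
    (∃ U : Fin k → Set Y, (∀ j, IsOpen (U j)) ∧ (⋃ j, U j) = Set.univ ∧
      ∀ j, ∃ g : C(U j, C(unitInterval, X)),
        ∀ (a : U j) (i : Fin n) (t : unitInterval),
          (t : ℝ) = ((i : ℕ) : ℝ) / ((n : ℝ) - 1) → g a t = φ i a) ↔
    (∃ V : Fin k → Set Y, (∀ j, IsOpen (V j)) ∧ (⋃ j, V j) = Set.univ ∧
      ∀ j (i l : Fin n),
        ((φ i).restrict (V j)).Homotopic ((φ l).restrict (V j))) := by
  have hm0 : (0:ℝ) < (n:ℝ) - 1 := by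
    have : (2:ℝ) ≤ (n:ℝ) := by exact_mod_cast hn
    linarith
  have hti : ∀ i : Fin n, ((i:ℕ):ℝ) / ((n:ℝ)-1) ∈ Icc (0:ℝ) 1 := by
    intro i
    constructor
    · positivity
    · rw [div_le_one hm0]
      have : (i:ℕ) ≤ n - 1 := by omega
      have := (Nat.cast_le (α := ℝ)).2 this
      rw [Nat.cast_sub (by omega)] at this
      simpa using this
  constructor
  · rintro ⟨U, hUopen, hUcover, hg⟩
    refine ⟨U, hUopen, hUcover, fun j i l => ?_⟩
    obtain ⟨g, hgspec⟩ := hg j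
    let ti : ℝ := ((i:ℕ):ℝ) / ((n:ℝ)-1)
    let tl : ℝ := ((l:ℕ):ℝ) / ((n:ℝ)-1)
    let sg : C(unitInterval, unitInterval) :=
      ContinuousMap.mk (fun s => projIcc 0 1 zero_le_one ((1 - (s:ℝ)) * ti + (s:ℝ) * tl))
        (continuous_projIcc.comp (by fun_prop))
    refine ⟨{ toFun := fun p => g p.2 (sg p.1)
              continuous_toFun := ?_
              map_zero_left := fun a => ?_
              map_one_left := fun a => ?_ }⟩
    · exact continuous_eval.comp
        ((g.continuous.comp continuous_snd).prodMk (sg.continuous.comp continuous_fst))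
    · refine hgspec a i (sg 0) ?_
      show (max 0 (min 1 ((1 - ((0:unitInterval):ℝ)) * ti + ((0:unitInterval):ℝ) * tl)) : ℝ) = ti
      rw [show ((0:unitInterval):ℝ) = 0 from rfl]
      rw [show (1 - (0:ℝ)) * ti + 0 * tl = ti by ring]
      rw [min_eq_right (hti i).2, max_eq_right (hti i).1]
    · refine hgspec a l (sg 1) ?_
      show (max 0 (min 1 ((1 - ((1:unitInterval):ℝ)) * ti + ((1:unitInterval):ℝ) * tl)) : ℝ) = tl
      rw [show ((1:unitInterval):ℝ) = 1 from rfl]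
      rw [show (1 - (1:ℝ)) * ti + 1 * tl = tl by ring]
      rw [min_eq_right (hti l).2, max_eq_right (hti l).1]
  · rintro ⟨V, hVopen, hVcover, hh⟩
    refine ⟨V, hVopen, hVcover, fun j => ?_⟩
    set m : ℕ := n - 1 with hm_def
    have hm1 : 1 ≤ m := by omega
    have hmr : ((m:ℕ):ℝ) = (n:ℝ) - 1 := by
      rw [hm_def, Nat.cast_sub (by omega), Nat.cast_one]
    -- the maps, extended to all of ℕ
    let e : ℕ → Fin n := fun i => ⟨min i (n-1), by omega⟩
    have he : ∀ i : ℕ, i ≤ m → (e i : ℕ) = i := fun i h => by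
      simp only [e]; omega
    -- chosen homotopies
    let H : ∀ i : ℕ, ContinuousMap.Homotopy ((φ (e i)).restrict (V j))
        ((φ (e (i+1))).restrict (V j)) := fun i => (hh j (e i) (e (i+1))).some
    -- index function
    let idx : unitInterval → ℕ := fun t => min ⌊(m:ℝ) * (t:ℝ)⌋₊ (m-1)
    -- the glued map
    let F : (V j) × unitInterval → X := fun p =>
      H (idx p.2) (projIcc 0 1 zero_le_one ((m:ℝ) * (p.2:ℝ) - (idx p.2 : ℕ)), p.1)
    -- per-piece maps
    let G : ℕ → (V j) × unitInterval → X := fun i p =>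
      H i (projIcc 0 1 zero_le_one ((m:ℝ) * (p.2:ℝ) - (i:ℕ)), p.1)
    have hGcont : ∀ i, Continuous (G i) := fun i =>
      (H i).continuous.comp ((continuous_projIcc.comp (by fun_prop)).prodMk continuous_fst)
    -- closed pieces
    let Cs : Fin m → Set ((V j) × unitInterval) := fun i =>
      {p | ((i:ℕ):ℝ) / (m:ℝ) ≤ (p.2:ℝ) ∧ (p.2:ℝ) ≤ (((i:ℕ):ℝ)+1) / (m:ℝ)}
    have hmpos : (0:ℝ) < (m:ℝ) := by exact_mod_cast hm1
    have hCclosed : ∀ i, IsClosed (Cs i) := by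
      intro i
      have hc : Continuous fun p : (V j) × unitInterval => (p.2:ℝ) := by fun_prop
      exact (isClosed_le continuous_const hc).inter (isClosed_le hc continuous_const)
    have hCcover : ⋃ i, Cs i = univ := by
      apply eq_univ_of_forall
      intro p
      have ht0 : (0:ℝ) ≤ (p.2:ℝ) := p.2.2.1
      have ht1 : (p.2:ℝ) ≤ 1 := p.2.2.2
      obtain ⟨i0, hi0⟩ : ∃ i0, idx p.2 = i0 := ⟨_, rfl⟩
      have hi0le : i0 ≤ m - 1 := by rw [← hi0]; exact Nat.min_le_right _ _
      have hfloor : i0 ≤ ⌊(m:ℝ) * (p.2:ℝ)⌋₊ := by rw [← hi0]; exact Nat.min_le_left _ _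
      refine mem_iUnion.2 ⟨⟨i0, by omega⟩, ?_, ?_⟩
      · show ((i0:ℕ):ℝ) / (m:ℝ) ≤ (p.2:ℝ)
        rw [div_le_iff₀ hmpos]
        have h1 : ((i0:ℕ):ℝ) ≤ (m:ℝ) * (p.2:ℝ) :=
          le_trans (by exact_mod_cast hfloor) (Nat.floor_le (by positivity))
        linarith
      · show (p.2:ℝ) ≤ (((i0:ℕ):ℝ) + 1) / (m:ℝ)
        rw [le_div_iff₀ hmpos]
        rcases le_or_gt (⌊(m:ℝ) * (p.2:ℝ)⌋₊) (m-1) with h | h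
        · have hE : i0 = ⌊(m:ℝ) * (p.2:ℝ)⌋₊ := by rw [← hi0]; simp only [idx]; omega
          have h2 := Nat.lt_floor_add_one ((m:ℝ) * (p.2:ℝ))
          have hc : ((i0:ℕ):ℝ) = ((⌊(m:ℝ) * (p.2:ℝ)⌋₊ : ℕ):ℝ) := by exact_mod_cast hE
          linarith
        · have hE : i0 = m - 1 := by rw [← hi0]; simp only [idx]; omega
          have hc : ((i0:ℕ):ℝ) + 1 = (m:ℝ) := by
            rw [hE, Nat.cast_sub hm1]; push_cast; ring
          rw [hc]
          nlinarith
    -- EqOn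
    have hEq : ∀ i : Fin m, EqOn F (G i) (Cs i) := by
      intro i p hp
      obtain ⟨hlo, hhi⟩ := hp
      set t : ℝ := (p.2:ℝ) with ht_def
      have hilt : (i:ℕ) < m := i.2
      have hge : ((i:ℕ):ℝ) ≤ (m:ℝ) * t := by
        rw [div_le_iff₀ hmpos] at hlo; linarith
      have hle : (m:ℝ) * t ≤ ((i:ℕ):ℝ) + 1 := by
        rw [le_div_iff₀ hmpos] at hhi; linarith
      rcases lt_or_eq_of_le hle with hlt | heq
      · -- floor = i
        have htnn : (0:ℝ) ≤ (m:ℝ) * t := mul_nonneg (Nat.cast_nonneg m) p.2.2.1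
        have hfl : ⌊(m:ℝ) * t⌋₊ = (i:ℕ) := by
          rw [Nat.floor_eq_iff htnn]
          exact ⟨hge, by push_cast; linarith⟩
        have hidx : idx p.2 = (i:ℕ) := by
          simp only [idx, ← ht_def, hfl]; omega
        simp only [F, G]; rw [hidx]
      · -- m*t = i+1 exactly
        have hfl : ⌊(m:ℝ) * t⌋₊ = (i:ℕ) + 1 := by
          have hc : (m:ℝ) * t = (((i:ℕ)+1 : ℕ):ℝ) := by push_cast; linarith
          rw [hc, Nat.floor_natCast]
        have hGval : G i p = φ (e ((i:ℕ)+1)) p.1 := by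
          have h1 : (m:ℝ) * t - ((i:ℕ):ℝ) = 1 := by linarith
          simp only [G, ← ht_def, h1]
          rw [show projIcc (0:ℝ) 1 zero_le_one 1 = 1 from projIcc_right _]
          exact (H (i:ℕ)).apply_one p.1
        rcases lt_or_eq_of_le (Nat.succ_le_of_lt hilt) with hlt2 | heq2
        · -- i+1 ≤ m-1
          have hidx : idx p.2 = (i:ℕ) + 1 := by
            simp only [idx, ← ht_def, hfl]; omega
          have hFval : F p = φ (e ((i:ℕ)+1)) p.1 := by
            simp only [F, ← ht_def]
            rw [hidx]
            have h0 : (m:ℝ) * t - (((i:ℕ)+1:ℕ):ℝ) = 0 := by push_cast; linarith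
            rw [h0, show projIcc (0:ℝ) 1 zero_le_one 0 = 0 from projIcc_left _]
            exact (H ((i:ℕ)+1)).apply_zero p.1
          rw [hFval, hGval]
        · -- i+1 = m, so idx = m-1 = i
          have hidx : idx p.2 = (i:ℕ) := by
            simp only [idx, ← ht_def, hfl]; omega
          simp only [F, G]; rw [hidx]
    have hFcont : Continuous F := by
      refine (locallyFinite_of_finite Cs).continuous hCcover hCclosed fun i => ?_
      exact ((hGcont i).continuousOn).congr (hEq i)
    refine ⟨(ContinuousMap.mk F hFcont).curry, ?_⟩
    intro a i t htval
    show F (a, t) = φ i a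
    have him : (i:ℕ) ≤ m := by omega
    have hmt : (m:ℝ) * (t:ℝ) = ((i:ℕ):ℝ) := by
      rw [htval, ← hmr]
      field_simp
    rcases lt_or_eq_of_le him with hlt | heq
    · have hfl : ⌊(m:ℝ) * (t:ℝ)⌋₊ = (i:ℕ) := by
        rw [hmt]; exact Nat.floor_natCast _
      have hidx : idx t = (i:ℕ) := by simp only [idx, hfl]; omega
      have h0 : (m:ℝ) * (t:ℝ) - ((idx t : ℕ):ℝ) = 0 := by rw [hidx, hmt]; ring
      show H (idx t) (projIcc 0 1 zero_le_one ((m:ℝ) * (t:ℝ) - (idx t : ℕ)), a) = φ i a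
      rw [h0, show projIcc (0:ℝ) 1 zero_le_one 0 = 0 from projIcc_left _]
      have := (H (idx t)).apply_zero a
      rw [this]
      have : e (idx t) = i := by
        apply Fin.ext
        rw [he _ (by omega), hidx]
      rw [this]
      rfl
    · -- i = m
      have hfl : ⌊(m:ℝ) * (t:ℝ)⌋₊ = m := by
        rw [hmt, heq]; exact Nat.floor_natCast _
      have hidx : idx t = m - 1 := by simp only [idx, hfl]; omega
      have h1 : (m:ℝ) * (t:ℝ) - ((idx t : ℕ):ℝ) = 1 := by
        rw [hidx, hmt]
        have hc : ((i:ℕ):ℝ) = ((m:ℕ):ℝ) := by exact_mod_cast heq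
        rw [hc, Nat.cast_sub hm1, Nat.cast_one]
        ring
      show H (idx t) (projIcc 0 1 zero_le_one ((m:ℝ) * (t:ℝ) - (idx t : ℕ)), a) = φ i a
      rw [h1, show projIcc (0:ℝ) 1 zero_le_one 1 = 1 from projIcc_right _]
      have := (H (idx t)).apply_one a
      rw [this]
      have : e (idx t + 1) = i := by
        apply Fin.ext
        rw [he _ (by omega), hidx, heq]
        omega
      rw [this]
      rfl
end

section
/- Let X be a topological space, let n ≥ 2 and k ≥ 1. Then the following are equivalent: (i) there exist open sets U₁, …, U_k covering Xⁿ and, for each j ∈ {1, …, k}, a continuous map s_j : U_j → C([0,1], X) such that for every x = (x₁, …, xₙ) ∈ U_j and every i ∈ {1, …, n} one has s_j(x)((i−1)/(n−1)) = xᵢ; (ii) there exist open sets V₁, …, V_k covering Xⁿ such that for each j ∈ {1, …, k} and all i, l ∈ {1, …, n}, the restrictions to V_j of the i-th and l-th coordinate projections Xⁿ → X are homotopic as continuous maps V_j → X. -/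
open Set unitInterval

/-- If `|u - i| ≤ 1/2` then either `round u = i`, or `u = i + 1/2` and `round u = i + 1`. -/
lemma round_cases_aux (i : ℕ) (u : ℝ) (h : |u - (i : ℝ)| ≤ 1 / 2) :
    round u = (i : ℤ) ∨ (u = (i : ℝ) + 1 / 2 ∧ round u = (i : ℤ) + 1) := by
  rw [abs_le] at h
  obtain ⟨h1, h2⟩ := h
  rcases lt_or_eq_of_le h2 with h2' | h2'
  · left
    rw [round_eq]
    apply Int.floor_eq_iff.2
    constructor
    · push_cast; linarith
    · push_cast; linarith
  · right
    refine ⟨by linarith, ?_⟩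
    rw [round_eq]
    have : u + 1 / 2 = ((i : ℤ) + 1 : ℤ) := by push_cast; linarith
    rw [this, Int.floor_intCast]

/-- `TC_n(X) ≤ k` (existence of an open cover of `Xⁿ` by `k` sets with
continuous sections of the path fibration through all coordinates at the times
`i/(n-1)`, `i : Fin n`) is equivalent to the existence of an open cover of `Xⁿ` by
`k` sets on each of which any two coordinate projections are homotopic. -/
theorem statement3 {X : Type*} [TopologicalSpace X] (n k : ℕ) (hn : 2 ≤ n) (hk : 1 ≤ k) :
    (∃ U : Fin k → Set (Fin n → X), (∀ j, IsOpen (U j)) ∧ (⋃ j, U j) = Set.univ ∧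
      ∀ j, ∃ s : C(U j, C(unitInterval, X)),
        ∀ (x : U j) (i : Fin n) (t : unitInterval),
          (t : ℝ) = ((i : ℕ) : ℝ) / ((n : ℝ) - 1) → s x t = (x : Fin n → X) i) ↔
    (∃ V : Fin k → Set (Fin n → X), (∀ j, IsOpen (V j)) ∧ (⋃ j, V j) = Set.univ ∧
      ∀ j (i l : Fin n),
        ((⟨fun x => x i, continuous_apply i⟩ : C(Fin n → X, X)).restrict (V j)).Homotopic
          ((⟨fun x => x l, continuous_apply l⟩ : C(Fin n → X, X)).restrict (V j))) := by
  haveI : NeZero n := ⟨by omega⟩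
  have hmr : (0 : ℝ) < (n : ℝ) - 1 := by
    have : (2 : ℝ) ≤ (n : ℝ) := by exact_mod_cast hn
    linarith
  have hfr : ∀ i : Fin n, ((i : ℕ) : ℝ) ≤ (n : ℝ) - 1 := by
    intro i
    have : (i : ℕ) + 1 ≤ n := i.2
    have : ((i : ℕ) : ℝ) + 1 ≤ (n : ℝ) := by exact_mod_cast this
    linarith
  constructor
  · -- sections ⇒ homotopies
    rintro ⟨U, hUo, hUc, hs⟩
    refine ⟨U, hUo, hUc, fun j i l => ?_⟩
    obtain ⟨s, hsp⟩ := hs j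
    -- time value travelled : at parameter t, we are at time ((1-t)*i + t*l)/(n-1)
    have mem : ∀ t : unitInterval,
        (((1 : ℝ) - t) * (i : ℕ) + (t : ℝ) * (l : ℕ)) / ((n : ℝ) - 1) ∈ Icc (0:ℝ) 1 := by
      intro t
      have ht0 : (0:ℝ) ≤ t := t.2.1
      have ht1 : (t:ℝ) ≤ 1 := t.2.2
      have hi : ((i : ℕ) : ℝ) ≤ (n : ℝ) - 1 := hfr i
      have hl : ((l : ℕ) : ℝ) ≤ (n : ℝ) - 1 := hfr l
      have hi0 : (0:ℝ) ≤ ((i : ℕ) : ℝ) := Nat.cast_nonneg _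
      have hl0 : (0:ℝ) ≤ ((l : ℕ) : ℝ) := Nat.cast_nonneg _
      constructor
      · apply div_nonneg _ (le_of_lt hmr)
        nlinarith
      · rw [div_le_one hmr]
        nlinarith
    set sg : unitInterval → unitInterval := fun t =>
      projIcc 0 1 zero_le_one ((((1 : ℝ) - t) * (i : ℕ) + (t : ℝ) * (l : ℕ)) / ((n : ℝ) - 1))
      with hsg
    have hsgc : Continuous sg := by
      apply continuous_projIcc.comp
      fun_prop
    have hsgval : ∀ t : unitInterval,
        (sg t : ℝ) = (((1 : ℝ) - t) * (i : ℕ) + (t : ℝ) * (l : ℕ)) / ((n : ℝ) - 1) := by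
      intro t
      rw [hsg]
      simp only
      rw [projIcc_of_mem _ (mem t)]
    refine ⟨⟨⟨fun p => s p.2 (sg p.1), ?_⟩, ?_, ?_⟩⟩
    · have : Continuous (fun p : unitInterval × ↥(U j) => (s p.2, sg p.1)) :=
        Continuous.prodMk (s.continuous.comp continuous_snd) (hsgc.comp continuous_fst)
      exact ContinuousEval.continuous_eval.comp this
    · intro x
      have : s x (sg 0) = (x : Fin n → X) i := by
        apply hsp
        rw [hsgval 0]
        norm_num
      simpa using this
    · intro x
      have : s x (sg 1) = (x : Fin n → X) l := by
        apply hsp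
        rw [hsgval 1]
        norm_num
      simpa using this
  · -- homotopies ⇒ sections
    rintro ⟨V, hVo, hVc, hH⟩
    refine ⟨V, hVo, hVc, fun j => ?_⟩
    -- choose for each i a homotopy from the i-th projection to the 0-th projection
    have H : ∀ i : Fin n,
        ((⟨fun x => x i, continuous_apply i⟩ : C(Fin n → X, X)).restrict (V j)).Homotopy
          ((⟨fun x => x (0 : Fin n), continuous_apply _⟩ : C(Fin n → X, X)).restrict (V j)) :=
      fun i => (hH j i 0).some
    -- the index of the homotopy used at real time u (rescaled by n-1)
    have hidx : ∀ u : ℝ, min (round u).toNat (n - 1) < n := fun u =>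
      Nat.lt_of_le_of_lt (min_le_right _ _) (by omega)
    set idx : ℝ → Fin n := fun u => ⟨min (round u).toNat (n - 1), hidx u⟩ with hidxdef
    set sg : Fin n → ℝ → unitInterval := fun i u =>
      projIcc 0 1 zero_le_one (2 * |u - ((i : ℕ) : ℝ)|) with hsgdef
    set g : Fin n → (↥(V j) × unitInterval → X) := fun i p =>
      H i (sg i (((n : ℝ) - 1) * p.2), p.1) with hgdef
    have hg : ∀ i, Continuous (g i) := by
      intro i
      apply (H i).continuous.comp
      apply Continuous.prodMk _ continuous_fst
      apply continuous_projIcc.comp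
      fun_prop
    set f : ↥(V j) × unitInterval → X := fun p => g (idx (((n : ℝ) - 1) * p.2)) p with hfdef
    set D : Fin n → Set (↥(V j) × unitInterval) := fun i =>
      {p | |((n : ℝ) - 1) * p.2 - ((i : ℕ) : ℝ)| ≤ 1 / 2} with hDdef
    have hDc : ∀ i, IsClosed (D i) := by
      intro i
      have : Continuous fun p : ↥(V j) × unitInterval =>
          |((n : ℝ) - 1) * p.2 - ((i : ℕ) : ℝ)| := by fun_prop
      exact isClosed_le this continuous_const
    have hnr : ((n - 1 : ℕ) : ℝ) = (n : ℝ) - 1 := by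
      have h1 : (1:ℕ) ≤ n := by omega
      push_cast [Nat.cast_sub h1]
      ring
    -- on D i, the value of `idx` is i, or it is i+1 at the single seam point, where both agree
    have key : ∀ i : Fin n, EqOn f (g i) (D i) := by
      rintro i ⟨x, t⟩ hp
      have hpD : |((n : ℝ) - 1) * (t : ℝ) - ((i : ℕ) : ℝ)| ≤ 1 / 2 := hp
      have hiv : (i : ℕ) ≤ n - 1 := by omega
      rcases round_cases_aux i (((n : ℝ) - 1) * (t : ℝ)) hpD with hr | ⟨hu2, hr⟩
      · -- idx = i
        have hidxval : idx (((n : ℝ) - 1) * (t : ℝ)) = i := by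
          apply Fin.ext
          show min (round (((n : ℝ) - 1) * (t : ℝ))).toNat (n - 1) = (i : ℕ)
          rw [hr]
          simp [Int.toNat_natCast, min_eq_left hiv]
        show g (idx (((n : ℝ) - 1) * (t : ℝ))) (x, t) = g i (x, t)
        rw [hidxval]
      · -- seam point : both homotopies are at time 1, giving the 0-th projection
        have hile : ((i : ℕ) : ℝ) + 1 ≤ (n : ℝ) - 1 := by
          have hu1 : ((n : ℝ) - 1) * (t : ℝ) ≤ (n : ℝ) - 1 := by
            have ht1 : (t : ℝ) ≤ 1 := t.2.2
            nlinarith [hmr]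
          have h3 : ((i : ℕ) : ℝ) + 1 / 2 ≤ (n : ℝ) - 1 := by rw [← hu2]; exact hu1
          rw [← hnr] at h3 ⊢
          have h4 : ((i : ℕ) : ℝ) < ((n - 1 : ℕ) : ℝ) := by linarith
          have h5 : (i : ℕ) < n - 1 := by exact_mod_cast h4
          exact_mod_cast h5
        have hisucc : (i : ℕ) + 1 ≤ n - 1 := by
          rw [← hnr] at hile
          exact_mod_cast hile
        have hlt : (i : ℕ) + 1 < n := by omega
        have hidxval : idx (((n : ℝ) - 1) * (t : ℝ)) = ⟨(i : ℕ) + 1, hlt⟩ := by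
          apply Fin.ext
          show min (round (((n : ℝ) - 1) * (t : ℝ))).toNat (n - 1) = (i : ℕ) + 1
          rw [hr]
          have h6 : ((i : ℕ) : ℤ) + 1 = (((i : ℕ) + 1 : ℕ) : ℤ) := by push_cast; ring
          rw [h6, Int.toNat_natCast, min_eq_left hisucc]
        have hsg1 : sg ⟨(i : ℕ) + 1, hlt⟩ (((n : ℝ) - 1) * (t : ℝ)) = 1 := by
          show projIcc 0 1 zero_le_one
            (2 * |((n : ℝ) - 1) * (t : ℝ) - (((⟨(i : ℕ) + 1, hlt⟩ : Fin n) : ℕ) : ℝ)|) = 1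
          have h7 : |((n : ℝ) - 1) * (t : ℝ) - (((⟨(i : ℕ) + 1, hlt⟩ : Fin n) : ℕ) : ℝ)|
              = 1 / 2 := by
            rw [hu2]
            show |((i : ℕ) : ℝ) + 1 / 2 - (((i : ℕ) + 1 : ℕ) : ℝ)| = 1 / 2
            push_cast
            rw [abs_of_nonpos (by linarith)]
            ring
          rw [h7]
          norm_num
        have hsgi : sg i (((n : ℝ) - 1) * (t : ℝ)) = 1 := by
          show projIcc 0 1 zero_le_one
            (2 * |((n : ℝ) - 1) * (t : ℝ) - ((i : ℕ) : ℝ)|) = 1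
          have h7 : |((n : ℝ) - 1) * (t : ℝ) - ((i : ℕ) : ℝ)| = 1 / 2 := by
            rw [hu2, abs_of_nonneg (by linarith)]
            ring
          rw [h7]
          norm_num
        show g (idx (((n : ℝ) - 1) * (t : ℝ))) (x, t) = g i (x, t)
        rw [hidxval]
        show H ⟨(i : ℕ) + 1, hlt⟩ (sg ⟨(i : ℕ) + 1, hlt⟩ (((n : ℝ) - 1) * (t : ℝ)), x)
          = H i (sg i (((n : ℝ) - 1) * (t : ℝ)), x)
        rw [hsg1, hsgi, (H ⟨(i : ℕ) + 1, hlt⟩).apply_one, (H i).apply_one]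
    have hcov : (⋃ i, D i) = Set.univ := by
      apply Set.eq_univ_of_forall
      intro p
      set u : ℝ := ((n : ℝ) - 1) * p.2 with hu
      have hu0 : 0 ≤ u := by
        rw [hu]; exact mul_nonneg (le_of_lt hmr) p.2.2.1
      have hu1 : u ≤ (n : ℝ) - 1 := by
        rw [hu]
        have ht1 : (p.2 : ℝ) ≤ 1 := p.2.2.2
        nlinarith [hmr]
      have hr0 : (0 : ℤ) ≤ round u := by
        rw [round_eq]
        apply Int.floor_nonneg.2
        linarith
      have hnr : ((n - 1 : ℕ) : ℝ) = (n : ℝ) - 1 := by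
        have h1 : (1:ℕ) ≤ n := by omega
        push_cast [Nat.cast_sub h1]
        ring
      have hrm : round u ≤ (n - 1 : ℕ) := by
        have h1 : ((round u : ℤ) : ℝ) ≤ u + 1 / 2 := by
          rw [round_eq]
          exact_mod_cast Int.floor_le _
        have h2 : ((round u : ℤ) : ℝ) < ((n - 1 : ℕ) : ℝ) + 1 := by
          rw [hnr]; linarith
        exact_mod_cast Int.lt_add_one_iff.mp (by exact_mod_cast h2)
      have hcast : ((min (round u).toNat (n - 1) : ℕ) : ℝ) = ((round u : ℤ) : ℝ) := by
        have h1 : (round u).toNat ≤ n - 1 := by omega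
        rw [min_eq_left h1]
        have h2 : ((round u).toNat : ℤ) = round u := Int.toNat_of_nonneg hr0
        exact_mod_cast congrArg (Int.cast : ℤ → ℝ) h2
      apply Set.mem_iUnion.2
      refine ⟨idx u, ?_⟩
      show |u - ((idx u : ℕ) : ℝ)| ≤ 1 / 2
      have h3 : ((idx u : ℕ) : ℝ) = ((round u : ℤ) : ℝ) := hcast
      rw [h3]
      exact abs_sub_round u
    have hf : Continuous f :=
      (locallyFinite_of_finite D).continuous hcov hDc
        (fun i => ((hg i).continuousOn).congr (key i))
    refine ⟨(⟨f, hf⟩ : C(↥(V j) × unitInterval, X)).curry, ?_⟩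
    intro x i t ht
    have hu : ((n : ℝ) - 1) * (t : ℝ) = ((i : ℕ) : ℝ) := by
      rw [ht]
      field_simp
    have hiv : (i : ℕ) ≤ n - 1 := by omega
    have hidxi : idx ((i : ℕ) : ℝ) = i := by
      apply Fin.ext
      show min (round (((i : ℕ) : ℝ))).toNat (n - 1) = (i : ℕ)
      rw [round_natCast]
      simp [Int.toNat_natCast, min_eq_left hiv]
    have hsg0 : sg i ((i : ℕ) : ℝ) = 0 := by
      show projIcc 0 1 zero_le_one (2 * |((i : ℕ) : ℝ) - ((i : ℕ) : ℝ)|) = 0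
      rw [sub_self, abs_zero, mul_zero]
      exact projIcc_left _
    show g (idx (((n : ℝ) - 1) * (t : ℝ))) (x, t) = (x : Fin n → X) i
    rw [hu, hidxi]
    show H i (sg i (((n : ℝ) - 1) * (t : ℝ)), x) = (x : Fin n → X) i
    rw [hu, hsg0, (H i).apply_zero]
    rfl
end
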